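/- (Decay of the perpendicular-to-parallel ratio; precise form of Lemma 3.) Let w_* ∈ ℝ^d be nonzero, let 0 ≤ θ ≤ 1 and ϑ ≥ 0 with θ + ϑ + θϑ ≤ 1, and let 0 < η ≤ 1/(3‖w_*‖²). Let w₀, …, w_t ∈ ℝ^d satisfy, for all 0 ≤ s < t: ‖w_s‖² ≤ ‖w_*‖², |⟨w_{s+1}, w_*⟩| ≥ (1 − θ)|⟨w_s, w_*⟩| · (1 + 3η(‖w_*‖² − ‖w_s‖²)), and ‖w_{s+1}^⊥‖ ≤ (1 + ϑ)‖w_s^⊥‖ · (1 + η(‖w_*‖² − 3‖w_s‖²)). Then, with ψ := (1 − θ − ϑ − θϑ)(1 + η‖w_*‖²), it holds that ψ^t · ‖w_t^⊥‖ · |⟨w₀, w_*⟩| ≤ |⟨w_t, w_*⟩| · ‖w₀^⊥‖. -/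

import Mathlib

open scoped RealInnerProductSpace

lemma key_scalar (θ ϑ η A a : ℝ) (hθ0 : 0 ≤ θ) (hθ1 : θ ≤ 1) (hϑ : 0 ≤ ϑ)
    (hθϑ : θ + ϑ + θ * ϑ ≤ 1) (hη0 : 0 < η) (hη : η * A ≤ 1 / 3)
    (hA : 0 < A) (ha : 0 ≤ a) (haA : a ≤ A) :
    (1 - θ - ϑ - θ * ϑ) * (1 + η * A) * ((1 + ϑ) * (1 + η * (A - 3 * a)))
      ≤ (1 - θ) * (1 + 3 * η * (A - a)) := by
  have h1 : (1 - θ - ϑ - θ * ϑ) * (1 + ϑ) ≤ 1 - θ := by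
    nlinarith [mul_nonneg hθ0 hϑ, sq_nonneg ϑ, mul_nonneg (mul_nonneg hθ0 hϑ) hϑ]
  have hc : 0 ≤ 1 - θ - ϑ - θ * ϑ := by linarith
  have hfac : (0:ℝ) < 1 + η * (A - 3 * a) := by
    nlinarith [mul_le_mul_of_nonneg_left haA hη0.le, mul_nonneg hη0.le ha]
  have h2 : (1 + η * A) * (1 + η * (A - 3 * a)) ≤ 1 + 3 * η * (A - a) := by
    nlinarith [mul_nonneg (mul_nonneg (mul_nonneg hη0.le hη0.le) hA.le) ha,
      mul_nonneg (mul_pos hη0 hA).le (by linarith : (0:ℝ) ≤ 1 - η * A)]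
  have h3 : 0 ≤ (1 + η * A) * (1 + η * (A - 3 * a)) := by positivity
  nlinarith [mul_le_mul h1 h2 h3 (by linarith : (0:ℝ) ≤ 1 - θ)]

theorem perpendicular_ratio_decay (d : ℕ) (ws : EuclideanSpace ℝ (Fin d)) (hws : ws ≠ 0)
    (θ ϑ η : ℝ) (hθ0 : 0 ≤ θ) (hθ1 : θ ≤ 1) (hϑ : 0 ≤ ϑ) (hθϑ : θ + ϑ + θ * ϑ ≤ 1)
    (hη0 : 0 < η) (hη : η ≤ 1 / (3 * ‖ws‖ ^ 2))
    (t : ℕ) (w : ℕ → EuclideanSpace ℝ (Fin d))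
    (hw : ∀ s < t, ‖w s‖ ^ 2 ≤ ‖ws‖ ^ 2)
    (hpar : ∀ s < t,
      (1 - θ) * |⟪w s, ws⟫| * (1 + 3 * η * (‖ws‖ ^ 2 - ‖w s‖ ^ 2)) ≤ |⟪w (s + 1), ws⟫|)
    (hperp : ∀ s < t,
      ‖w (s + 1) - (⟪w (s + 1), ws⟫ / ‖ws‖ ^ 2) • ws‖
        ≤ (1 + ϑ) * ‖w s - (⟪w s, ws⟫ / ‖ws‖ ^ 2) • ws‖
          * (1 + η * (‖ws‖ ^ 2 - 3 * ‖w s‖ ^ 2))) :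
    ((1 - θ - ϑ - θ * ϑ) * (1 + η * ‖ws‖ ^ 2)) ^ t
        * ‖w t - (⟪w t, ws⟫ / ‖ws‖ ^ 2) • ws‖ * |⟪w 0, ws⟫|
      ≤ |⟪w t, ws⟫| * ‖w 0 - (⟪w 0, ws⟫ / ‖ws‖ ^ 2) • ws‖ := by
  have hws' : 0 < ‖ws‖ := norm_pos_iff.mpr hws
  have hA : (0:ℝ) < ‖ws‖ ^ 2 := by positivity
  set A := ‖ws‖ ^ 2 with hAdef
  have hηA : η * A ≤ 1 / 3 := by
    have h := (le_div_iff₀ (by positivity : (0:ℝ) < 3 * A)).mp hη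
    nlinarith
  set ψ := (1 - θ - ϑ - θ * ϑ) * (1 + η * A) with hψdef
  have hψ0 : 0 ≤ ψ := by
    apply mul_nonneg (by linarith) (by nlinarith [mul_pos hη0 hA])
  set p : ℕ → ℝ := fun s => ‖w s - (⟪w s, ws⟫ / A) • ws‖ with hp
  set q : ℕ → ℝ := fun s => |⟪w s, ws⟫| with hq
  -- one-step inequality
  have step : ∀ s < t, ψ * p (s + 1) * q s ≤ q (s + 1) * p s := by
    intro s hs
    have ha0 : (0:ℝ) ≤ ‖w s‖ ^ 2 := by positivity
    have haA := hw s hs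
    have hP : (1 - θ) * q s * (1 + 3 * η * (A - ‖w s‖ ^ 2)) ≤ q (s + 1) := hpar s hs
    have hQ : p (s + 1) ≤ (1 + ϑ) * p s * (1 + η * (A - 3 * ‖w s‖ ^ 2)) := hperp s hs
    have hkey := key_scalar θ ϑ η A (‖w s‖ ^ 2) hθ0 hθ1 hϑ hθϑ hη0 hηA hA ha0 haA
    have hp0 : 0 ≤ p s := norm_nonneg _
    have hq0 : 0 ≤ q s := abs_nonneg _
    have hQ' : ψ * p (s + 1) ≤ ψ * ((1 + ϑ) * p s * (1 + η * (A - 3 * ‖w s‖ ^ 2))) :=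
      mul_le_mul_of_nonneg_left hQ hψ0
    calc ψ * p (s + 1) * q s
        ≤ ψ * ((1 + ϑ) * p s * (1 + η * (A - 3 * ‖w s‖ ^ 2))) * q s :=
          mul_le_mul_of_nonneg_right hQ' hq0
      _ ≤ (1 - θ) * (1 + 3 * η * (A - ‖w s‖ ^ 2)) * p s * q s := by
          rw [hψdef]
          nlinarith [mul_le_mul_of_nonneg_right hkey (mul_nonneg hp0 hq0)]
      _ ≤ q (s + 1) * p s := by
          nlinarith [mul_le_mul_of_nonneg_right hP hp0]
  -- zero propagation for the perpendicular part
  have hzero : ∀ s < t, p s = 0 → p (s + 1) = 0 := by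
    intro s hs h0
    have hQ : p (s + 1) ≤ (1 + ϑ) * p s * (1 + η * (A - 3 * ‖w s‖ ^ 2)) := hperp s hs
    rw [h0] at hQ
    have : p (s + 1) ≤ 0 := by linarith [hQ]
    exact le_antisymm this (norm_nonneg _)
  -- induction
  clear hpar hperp hw hη
  show ψ ^ t * p t * q 0 ≤ q t * p 0
  induction t with
  | zero => rw [pow_zero, one_mul, mul_comm]
  | succ n ih =>
    have ihn := ih (fun s hs => step s (Nat.lt_succ_of_lt hs))
      (fun s hs => hzero s (Nat.lt_succ_of_lt hs))
    have stepn := step n n.lt_succ_self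
    have hp1 : 0 ≤ p (n + 1) := norm_nonneg _
    have hq1 : 0 ≤ q (n + 1) := abs_nonneg _
    have hpz : 0 ≤ p 0 := norm_nonneg _
    have hqz : 0 ≤ q 0 := abs_nonneg _
    have hpn : 0 ≤ p n := norm_nonneg _
    have hqn : 0 ≤ q n := abs_nonneg _
    rcases eq_or_lt_of_le hpn with hpn0 | hpn
    · have h1 := hzero n n.lt_succ_self hpn0.symm
      rw [pow_succ]
      rw [h1]
      simpa using mul_nonneg hq1 hpz
    · rcases eq_or_lt_of_le hqn with hqn0 | hqn
      · -- q n = 0 : from ihn, ψ^n * p n * q 0 ≤ 0, all nonneg → product = 0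
        have h2 : ψ ^ n * p n * q 0 ≤ 0 := by
          rw [← hqn0] at ihn; simpa using ihn
        have h4 : ψ ^ n * p n * q 0 = 0 :=
          le_antisymm h2
            (mul_nonneg (mul_nonneg (pow_nonneg hψ0 n) hpn.le) hqz)
        have h5 : ψ ^ (n + 1) * p (n + 1) * q 0 = 0 := by
          rcases mul_eq_zero.mp h4 with h6 | h6
          · rcases mul_eq_zero.mp h6 with h7 | h7
            · rw [pow_succ]
              rw [h7]; ring
            · exact absurd h7 hpn.ne'
          · rw [h6]; ring
        rw [h5]
        exact mul_nonneg hq1 hpz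
      · have hmul := mul_le_mul stepn ihn
          (mul_nonneg (mul_nonneg (pow_nonneg hψ0 n) hpn.le) hqz)
          (mul_nonneg hq1 hpn.le)
        have hpos : 0 < q n * p n := mul_pos hqn hpn
        rw [← mul_le_mul_iff_of_pos_right hpos]
        calc ψ ^ (n + 1) * p (n + 1) * q 0 * (q n * p n)
            = (ψ * p (n + 1) * q n) * (ψ ^ n * p n * q 0) := by ring
          _ ≤ (q (n + 1) * p n) * (q n * p 0) := hmul
          _ = q (n + 1) * p 0 * (q n * p n) := by ring
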